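/- arXiv:1605.03645 — 4 statements merged into one kernel-verified Lean document; each statement's English description precedes it below -/
import Mathlib

section
/- For every r > 0 and integer n ≥ 2, one has (sinh(2r))^n > 2n ∫_0^r (sinh(2u))^{n-1} du. -/
open intervalIntegral in
/-- For every `r > 0` and integer `n ≥ 2`,
`(sinh(2r))^n > 2 n ∫_0^r (sinh(2u))^(n-1) du`. -/
theorem stenzel_A_negativity (n : ℕ) (hn : 2 ≤ n) (r : ℝ) (hr : 0 < r) :
    2 * n * ∫ u in (0:ℝ)..r, Real.sinh (2 * u) ^ (n - 1) < Real.sinh (2 * r) ^ n := by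
  have hderiv : ∀ x ∈ Set.uIcc (0:ℝ) r, HasDerivAt (fun u => Real.sinh (2 * u) ^ n)
      (2 * n * (Real.sinh (2 * x) ^ (n - 1) * Real.cosh (2 * x))) x := by
    intro x _
    have h1 : HasDerivAt (fun u : ℝ => Real.sinh (2 * u)) (Real.cosh (2 * x) * 2) x :=
      (Real.hasDerivAt_sinh (2 * x)).comp x (by simpa using (hasDerivAt_id x).const_mul 2)
    have := h1.fun_pow n
    exact this.congr_deriv (by ring)
  have hfund : (∫ x in (0:ℝ)..r, 2 * n * (Real.sinh (2 * x) ^ (n - 1) * Real.cosh (2 * x)))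
      = Real.sinh (2 * r) ^ n := by
    rw [intervalIntegral.integral_eq_sub_of_hasDerivAt hderiv]
    · simp; omega
    · apply Continuous.intervalIntegrable
      exact continuous_const.mul (((Real.continuous_sinh.comp
        (continuous_const.mul continuous_id)).pow _).mul
        (Real.continuous_cosh.comp (continuous_const.mul continuous_id)))
  rw [← hfund, intervalIntegral.integral_const_mul]
  have hn0 : (0:ℝ) < 2 * n := by positivity
  apply (mul_lt_mul_iff_right₀ hn0).2
  apply intervalIntegral.integral_lt_integral_of_continuousOn_of_le_of_exists_lt hr
  · exact ((Real.continuous_sinh.comp (continuous_const.mul continuous_id)).pow _).continuousOn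
  · exact (((Real.continuous_sinh.comp (continuous_const.mul continuous_id)).pow _).mul
      (Real.continuous_cosh.comp (continuous_const.mul continuous_id))).continuousOn
  · intro x hx
    have h1 : (0:ℝ) < Real.sinh (2 * x) := Real.sinh_pos_iff.2 (by linarith [hx.1])
    have h2 : (1:ℝ) ≤ Real.cosh (2 * x) := Real.one_le_cosh _
    nlinarith [pow_pos h1 (n - 1)]
  · refine ⟨r, Set.right_mem_Icc.2 hr.le, ?_⟩
    have h1 : (0:ℝ) < Real.sinh (2 * r) := Real.sinh_pos_iff.2 (by linarith)
    have h2 : (1:ℝ) < Real.cosh (2 * r) := by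
      rw [Real.one_lt_cosh]; positivity
    nlinarith [pow_pos h1 (n - 1)]
end

section
/- Suppose a, b, c are positive differentiable functions of ρ satisfying ȧ/a = -A, ḃ/b = -B, ċ/c = -(n-1)C, where A = (a²-b²-c²)/(2abc), B = (b²-a²-c²)/(2abc), C = (c²-a²-b²)/(2abc). Then Ȧ = -nBC + A(A+B+C), Ḃ = -nAC + B(A+B+C), and Ċ = -2AB + (n-1)C(A+B+C). -/
set_option maxHeartbeats 1600000 in
/-- If positive differentiable functions `a, b, c` of `ρ` satisfy the Stenzel
(Ricci-flat) system `ȧ/a = -A`, `ḃ/b = -B`, `ċ/c = -(n-1)C` with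
`A = (a²-b²-c²)/(2abc)`, `B = (b²-a²-c²)/(2abc)`, `C = (c²-a²-b²)/(2abc)`, then
`Ȧ = -nBC + A(A+B+C)`, `Ḃ = -nAC + B(A+B+C)`, `Ċ = -2AB + (n-1)C(A+B+C)`. -/
theorem stenzel_ABC_derivatives (n : ℕ) (hn : 2 ≤ n) (a b c A B C : ℝ → ℝ)
    (ha : ∀ ρ, 0 < a ρ) (hb : ∀ ρ, 0 < b ρ) (hc : ∀ ρ, 0 < c ρ)
    (hA : ∀ ρ, A ρ = (a ρ ^ 2 - b ρ ^ 2 - c ρ ^ 2) / (2 * a ρ * b ρ * c ρ))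
    (hB : ∀ ρ, B ρ = (b ρ ^ 2 - a ρ ^ 2 - c ρ ^ 2) / (2 * a ρ * b ρ * c ρ))
    (hC : ∀ ρ, C ρ = (c ρ ^ 2 - a ρ ^ 2 - b ρ ^ 2) / (2 * a ρ * b ρ * c ρ))
    (hda : ∀ ρ, HasDerivAt a (-(A ρ) * a ρ) ρ)
    (hdb : ∀ ρ, HasDerivAt b (-(B ρ) * b ρ) ρ)
    (hdc : ∀ ρ, HasDerivAt c (-((n : ℝ) - 1) * C ρ * c ρ) ρ) :
    ∀ ρ, HasDerivAt A (-(n : ℝ) * B ρ * C ρ + A ρ * (A ρ + B ρ + C ρ)) ρ ∧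
      HasDerivAt B (-(n : ℝ) * A ρ * C ρ + B ρ * (A ρ + B ρ + C ρ)) ρ ∧
      HasDerivAt C (-2 * A ρ * B ρ + ((n : ℝ) - 1) * C ρ * (A ρ + B ρ + C ρ)) ρ := by
  intro ρ
  have ha0 : a ρ ≠ 0 := (ha ρ).ne'
  have hb0 : b ρ ≠ 0 := (hb ρ).ne'
  have hc0 : c ρ ≠ 0 := (hc ρ).ne'
  have hg0 : (2 : ℝ) * a ρ * b ρ * c ρ ≠ 0 := by positivity
  have hAv := hA ρ
  have hBv := hB ρ
  have hCv := hC ρ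
  -- derivatives of squares
  have hda2 : HasDerivAt (fun x => a x ^ 2) (2 * a ρ ^ 1 * (-(A ρ) * a ρ)) ρ := (hda ρ).pow 2
  have hdb2 : HasDerivAt (fun x => b x ^ 2) (2 * b ρ ^ 1 * (-(B ρ) * b ρ)) ρ := (hdb ρ).pow 2
  have hdc2 : HasDerivAt (fun x => c x ^ 2)
      (2 * c ρ ^ 1 * (-((n : ℝ) - 1) * C ρ * c ρ)) ρ := (hdc ρ).pow 2
  -- derivative of the denominator 2*a*b*c
  have hdg : HasDerivAt (fun x => 2 * a x * b x * c x)
      ((2 * (-(A ρ) * a ρ) * b ρ + 2 * a ρ * (-(B ρ) * b ρ)) * c ρ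
        + 2 * a ρ * b ρ * (-((n : ℝ) - 1) * C ρ * c ρ)) ρ :=
    (((hda ρ).const_mul 2).mul (hdb ρ)).mul (hdc ρ)
  refine ⟨?_, ?_, ?_⟩
  · have h := ((hda2.sub hdb2).sub hdc2).div hdg hg0
    have hAeq : A = fun x => (a x ^ 2 - b x ^ 2 - c x ^ 2) / (2 * a x * b x * c x) :=
      funext hA
    rw [hAeq]
    refine h.congr_deriv ?_
    rw [hAv, hBv, hCv]
    simp only [Pi.sub_apply]
    field_simp
    ring
  · have h := (((hdb2.sub hda2).sub hdc2)).div hdg hg0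
    have hBeq : B = fun x => (b x ^ 2 - a x ^ 2 - c x ^ 2) / (2 * a x * b x * c x) :=
      funext hB
    rw [hBeq]
    refine h.congr_deriv ?_
    rw [hAv, hBv, hCv]
    simp only [Pi.sub_apply]
    field_simp
    ring
  · have h := (((hdc2.sub hda2).sub hdb2)).div hdg hg0
    have hCeq : C = fun x => (c x ^ 2 - a x ^ 2 - b x ^ 2) / (2 * a x * b x * c x) :=
      funext hC
    rw [hCeq]
    refine h.congr_deriv ?_
    rw [hAv, hBv, hCv]
    simp only [Pi.sub_apply]
    field_simp
    ring
end

section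
/- With A, B, C defined from positive functions a, b, c satisfying the Stenzel system as above, one has Ḃ + Ċ = (B+C)(-A + B + (n-1)C), Ċ + Ȧ = (C+A)(-B + A + (n-1)C), and Ȧ + Ḃ = (A+B)(-(n-1)C + A + B). -/
set_option maxHeartbeats 1000000


/-- With `A, B, C` defined from positive functions `a, b, c` satisfying the
Stenzel system `ȧ/a = -A`, `ḃ/b = -B`, `ċ/c = -(n-1)C`, one has
`Ḃ + Ċ = (B+C)(-A + B + (n-1)C)`, `Ċ + Ȧ = (C+A)(-B + A + (n-1)C)`,
`Ȧ + Ḃ = (A+B)(-(n-1)C + A + B)`. -/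
theorem stenzel_ABC_sum_derivatives (n : ℕ) (hn : 2 ≤ n) (a b c A B C : ℝ → ℝ)
    (ha : ∀ ρ, 0 < a ρ) (hb : ∀ ρ, 0 < b ρ) (hc : ∀ ρ, 0 < c ρ)
    (hA : ∀ ρ, A ρ = (a ρ ^ 2 - b ρ ^ 2 - c ρ ^ 2) / (2 * a ρ * b ρ * c ρ))
    (hB : ∀ ρ, B ρ = (b ρ ^ 2 - a ρ ^ 2 - c ρ ^ 2) / (2 * a ρ * b ρ * c ρ))
    (hC : ∀ ρ, C ρ = (c ρ ^ 2 - a ρ ^ 2 - b ρ ^ 2) / (2 * a ρ * b ρ * c ρ))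
    (hda : ∀ ρ, HasDerivAt a (-(A ρ) * a ρ) ρ)
    (hdb : ∀ ρ, HasDerivAt b (-(B ρ) * b ρ) ρ)
    (hdc : ∀ ρ, HasDerivAt c (-((n : ℝ) - 1) * C ρ * c ρ) ρ) :
    ∀ ρ, HasDerivAt (fun t => B t + C t) ((B ρ + C ρ) * (-(A ρ) + B ρ + ((n : ℝ) - 1) * C ρ)) ρ ∧
      HasDerivAt (fun t => C t + A t) ((C ρ + A ρ) * (-(B ρ) + A ρ + ((n : ℝ) - 1) * C ρ)) ρ ∧
      HasDerivAt (fun t => A t + B t) ((A ρ + B ρ) * (-((n : ℝ) - 1) * C ρ + A ρ + B ρ)) ρ := by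
  intro ρ
  have ha' := (ha ρ).ne'
  have hb' := (hb ρ).ne'
  have hc' := (hc ρ).ne'
  refine ⟨?_, ?_, ?_⟩
  · have heq : (fun t => B t + C t) = fun t => -(a t) / (b t * c t) := by
      funext t
      have h1 := (ha t).ne'
      have h2 := (hb t).ne'
      have h3 := (hc t).ne'
      rw [hB, hC]
      field_simp
      ring
    rw [heq]
    have h := ((hda ρ).neg.div ((hdb ρ).mul (hdc ρ)) (mul_ne_zero hb' hc'))
    refine h.congr_deriv ?_
    simp only [Pi.mul_apply, Pi.neg_apply]
    rw [hA ρ, hB ρ, hC ρ]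
    field_simp
    ring
  · have heq : (fun t => C t + A t) = fun t => -(b t) / (a t * c t) := by
      funext t
      have h1 := (ha t).ne'
      have h2 := (hb t).ne'
      have h3 := (hc t).ne'
      rw [hA, hC]
      field_simp
      ring
    rw [heq]
    have h := ((hdb ρ).neg.div ((hda ρ).mul (hdc ρ)) (mul_ne_zero ha' hc'))
    refine h.congr_deriv ?_
    simp only [Pi.mul_apply, Pi.neg_apply]
    rw [hA ρ, hB ρ, hC ρ]
    field_simp
    ring
  · have heq : (fun t => A t + B t) = fun t => -(c t) / (a t * b t) := by
      funext t
      have h1 := (ha t).ne'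
      have h2 := (hb t).ne'
      have h3 := (hc t).ne'
      rw [hA, hB]
      field_simp
      ring
    rw [heq]
    have h := ((hdc ρ).neg.div ((hda ρ).mul (hdb ρ)) (mul_ne_zero ha' hb'))
    refine h.congr_deriv ?_
    simp only [Pi.mul_apply, Pi.neg_apply]
    rw [hA ρ, hB ρ, hC ρ]
    field_simp
    ring
end

section
/- Let Ω = ω¹∧…∧ωⁿ where {ωʲ} is an orthonormal basis of H* (extended by zero on 𝒱) in V = H ⊕ 𝒱, and let L be the graph of a linear map H → 𝒱 with adapted bases e_j = cos θ_j u_j + sin θ_j v_j and e_{n+μ} = -sin θ_μ u_μ + cos θ_μ v_μ as above. Set 𝔰 = max_j |sin θ_j|. Then |Ω(e_{n+μ}, e_1, …, ê_i, …, e_n)| ≤ 𝔰 for all i, μ. -/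
/-- Let `Ω = ω¹∧…∧ωⁿ`, where `{ωʲ}` is an orthonormal coframe of `H`
(extended by zero on `𝒱 = Hᗮ`), realized as `ωˡ(x) = ⟪w l, x⟫` for an orthonormal basis
`{w l}` of `H`, so that `Ω(x_1, …, x_n) = det [ωˡ(x_k)]`.  Let `L` be the graph of a linear
map `H → 𝒱` with adapted bases `e_j = cos θ_j u_j + sin θ_j v_j` (of `L`) and
`e_{n+μ} = -sin θ_μ u_μ + cos θ_μ v_μ` (of `L^⊥`) as in the singular value decomposition,
and set `𝔰 = max_j |sin θ_j|`.  Then `|Ω(e_{n+μ}, e_1, …, ê_i, …, e_n)| ≤ 𝔰` for all `i, μ`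
(`ê_i` meaning that `e_i` is omitted). -/
theorem wedge_estimate_first_of_linear1
    {V : Type*} [NormedAddCommGroup V] [InnerProductSpace ℝ V]
    (n m : ℕ) (H : Submodule ℝ V)
    (w u v : ℕ → V) (θ : ℕ → ℝ)
    -- `{w l}` is an orthonormal basis of `H`, defining the coframe `ωˡ = ⟪w l, ·⟫`
    (hw : Orthonormal ℝ (fun l : Fin n => w l))
    (hwspan : Submodule.span ℝ (Set.range fun l : Fin n => w l) = H)
    -- `{u j}` is an orthonormal basis of `H`, `{v μ}` an orthonormal basis of `𝒱 = Hᗮ`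
    (hu : Orthonormal ℝ (fun j : Fin n => u j))
    (huspan : Submodule.span ℝ (Set.range fun j : Fin n => u j) = H)
    (hv : Orthonormal ℝ (fun μ : Fin m => v μ))
    (hvspan : Submodule.span ℝ (Set.range fun μ : Fin m => v μ) = Hᗮ)
    -- conventions: `v_j := 0`, `θ_j := 0` for `j > m`; `u_μ := 0`, `θ_μ := 0` for `μ > n`
    (hvzero : ∀ j, m ≤ j → v j = 0 ∧ θ j = 0)
    (huzero : ∀ μ, n ≤ μ → u μ = 0 ∧ θ μ = 0)
    -- the adapted bases `e_j` of `L` and `e_{n+μ}` of `L^⊥`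
    (E E' : ℕ → V)
    (hE : ∀ j, E j = Real.cos (θ j) • u j + Real.sin (θ j) • v j)
    (hE' : ∀ μ, E' μ = -Real.sin (θ μ) • u μ + Real.cos (θ μ) • v μ)
    -- `Ω` evaluated on an `n`-tuple of vectors
    (Ω : (Fin n → V) → ℝ)
    (hΩ : ∀ x : Fin n → V, Ω x = Matrix.det (Matrix.of fun k l : Fin n => (inner ℝ (w l) (x k) : ℝ)))
    -- `𝔰 = max_j |sin θ_j|`
    (𝔰 : ℝ) (h𝔰 : IsGreatest (Set.range fun j : Fin n => |Real.sin (θ j)|) 𝔰) :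
    ∀ (i : Fin n) (μ : Fin m),
      |Ω (fun k : Fin n =>
        if (k : ℕ) = 0 then E' μ
        else if (k : ℕ) - 1 < (i : ℕ) then E ((k : ℕ) - 1) else E (k : ℕ))| ≤ 𝔰 := by
  intro i μ
  -- basic membership facts
  have hwH : ∀ l : Fin n, w l ∈ H := fun l => by
    rw [← hwspan]; exact Submodule.subset_span ⟨l, rfl⟩
  have huH : ∀ j : Fin n, u (j : ℕ) ∈ H := fun j => by
    rw [← huspan]; exact Submodule.subset_span ⟨j, rfl⟩
  have hwv : ∀ (l : Fin n) (j : ℕ), (inner ℝ (w l) (v j) : ℝ) = 0 := by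
    intro l j
    by_cases hj : j < m
    · have hvH : v j ∈ Hᗮ := by
        rw [← hvspan]; exact Submodule.subset_span ⟨⟨j, hj⟩, rfl⟩
      exact (Submodule.mem_orthogonal _ _).mp hvH _ (hwH l)
    · rw [(hvzero j (le_of_not_gt hj)).1, inner_zero_right]
  have hbound : ∀ j : Fin n, |Real.sin (θ j)| ≤ 𝔰 := fun j => h𝔰.2 ⟨j, rfl⟩
  have h𝔰0 : 0 ≤ 𝔰 := le_trans (abs_nonneg _) (hbound i)
  by_cases hμn : (μ : ℕ) < n
  swap
  · -- degenerate case: the first row of the matrix vanishes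
    rw [hΩ]
    have h0 : Matrix.det (Matrix.of fun k l : Fin n =>
        (inner ℝ (w l) ((fun k : Fin n =>
          if (k : ℕ) = 0 then E' μ
          else if (k : ℕ) - 1 < (i : ℕ) then E ((k : ℕ) - 1) else E (k : ℕ)) k) : ℝ)) = 0 := by
      apply Matrix.det_eq_zero_of_row_eq_zero (⟨0, i.pos⟩ : Fin n)
      intro l
      simp only [Matrix.of_apply, reduceIte]
      rw [hE' μ, (huzero μ (le_of_not_gt hμn)).1]
      simp [inner_add_right, real_inner_smul_right, hwv]
    rw [h0, abs_zero]; exact h𝔰0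
  -- main case : μ < n
  set σ' : Fin n → ℕ := fun k =>
    if (k : ℕ) = 0 then (μ : ℕ) else (if (k : ℕ) - 1 < (i : ℕ) then (k : ℕ) - 1 else (k : ℕ))
    with hσ'def
  have hσ'lt : ∀ k : Fin n, σ' k < n := by
    intro k
    simp only [hσ'def]
    split_ifs with h1 h2
    · exact hμn
    · omega
    · exact k.2
  set σ : Fin n → Fin n := fun k => ⟨σ' k, hσ'lt k⟩ with hσdef
  set c : Fin n → ℝ := fun k =>
    if (k : ℕ) = 0 then -Real.sin (θ μ) else Real.cos (θ (σ' k)) with hcdef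
  set A : Matrix (Fin n) (Fin n) ℝ := Matrix.of fun j l : Fin n => (inner ℝ (w l) (u j) : ℝ)
    with hAdef
  -- the matrix of the statement factors through A
  have hM : (Matrix.of fun k l : Fin n =>
      (inner ℝ (w l) ((fun k : Fin n =>
        if (k : ℕ) = 0 then E' μ
        else if (k : ℕ) - 1 < (i : ℕ) then E ((k : ℕ) - 1) else E (k : ℕ)) k) : ℝ))
      = Matrix.of fun k l : Fin n => c k * (A.submatrix σ id) k l := by
    ext k l
    simp only [Matrix.of_apply, Matrix.submatrix_apply, id_eq, hcdef, hAdef, hσdef, hσ'def]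
    by_cases hk : (k : ℕ) = 0
    · rw [if_pos hk, if_pos hk, if_pos hk, hE' μ]
      rw [inner_add_right, real_inner_smul_right, real_inner_smul_right, hwv]
      ring
    · rw [if_neg hk, if_neg hk, if_neg hk]
      by_cases hki : (k : ℕ) - 1 < (i : ℕ)
      · rw [if_pos hki, if_pos hki, hE]
        rw [inner_add_right, real_inner_smul_right, real_inner_smul_right, hwv]
        ring
      · rw [if_neg hki, if_neg hki, hE]
        rw [inner_add_right, real_inner_smul_right, real_inner_smul_right, hwv]
        ring
  rw [hΩ, hM, Matrix.det_mul_column]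
  by_cases hμi : (μ : ℕ) = (i : ℕ)
  · -- σ is injective, so the submatrix is orthogonal and |det| = 1
    have hinj : Function.Injective σ := by
      intro k k' h
      have h' : σ' k = σ' k' := congrArg Fin.val h
      simp only [hσ'def] at h'
      have hk := k.2; have hk' := k'.2; have hi := i.2
      apply Fin.ext
      split_ifs at h' <;> omega
    -- inner products of the u's expand over the orthonormal basis w of H
    have hw' : Orthonormal ℝ (fun l : Fin n => (⟨w l, hwH l⟩ : H)) := by
      rw [orthonormal_iff_ite] at hw ⊢
      intro l l'
      simpa [Submodule.coe_inner] using hw l l'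
    have hspan' : ⊤ ≤ Submodule.span ℝ (Set.range fun l : Fin n => (⟨w l, hwH l⟩ : H)) := by
      have hmap : Submodule.map H.subtype
          (Submodule.span ℝ (Set.range fun l : Fin n => (⟨w l, hwH l⟩ : H)))
          = Submodule.map H.subtype (⊤ : Submodule ℝ H) := by
        rw [Submodule.map_span, Submodule.map_subtype_top, ← Set.range_comp]
        exact hwspan
      exact le_of_eq (Submodule.map_injective_of_injective H.injective_subtype hmap).symm
    set b : OrthonormalBasis (Fin n) ℝ H := OrthonormalBasis.mk hw' hspan' with hbdef
    have hsum : ∀ p q : Fin n,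
        (∑ l : Fin n, (inner ℝ (w l) (u p) : ℝ) * (inner ℝ (w l) (u q) : ℝ))
          = if p = q then 1 else 0 := by
      intro p q
      have hpq := b.sum_inner_mul_inner (⟨u p, huH p⟩ : H) (⟨u q, huH q⟩ : H)
      rw [orthonormal_iff_ite] at hu
      have huval : (inner ℝ (⟨u (p : ℕ), huH p⟩ : H) (⟨u (q : ℕ), huH q⟩ : H) : ℝ)
          = if p = q then 1 else 0 := by
        rw [Submodule.coe_inner]; exact hu p q
      rw [huval] at hpq
      rw [← hpq]
      apply Finset.sum_congr rfl
      intro l _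
      rw [hbdef, OrthonormalBasis.coe_mk, Submodule.coe_inner, Submodule.coe_inner]
      simp only [real_inner_comm (u (p : ℕ)) (w l)]
    have hBBT : (A.submatrix σ id) * (A.submatrix σ id).transpose = 1 := by
      ext k k'
      simp only [Matrix.mul_apply, Matrix.transpose_apply, Matrix.submatrix_apply, id_eq,
        Matrix.one_apply, hAdef, Matrix.of_apply]
      rw [hsum (σ k) (σ k')]
      by_cases h : k = k'
      · rw [if_pos h, if_pos (by rw [h])]
      · rw [if_neg h, if_neg (fun hc => h (hinj hc))]
    have hdet1 : Matrix.det (A.submatrix σ id) * Matrix.det (A.submatrix σ id) = 1 := by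
      have := congrArg Matrix.det hBBT
      rwa [Matrix.det_mul, Matrix.det_transpose, Matrix.det_one] at this
    have habs1 : |Matrix.det (A.submatrix σ id)| = 1 := by
      rcases mul_self_eq_one_iff.mp hdet1 with h | h <;> rw [h] <;> norm_num
    rw [abs_mul, habs1, mul_one, Finset.abs_prod]
    set k0 : Fin n := ⟨0, i.pos⟩ with hk0def
    rw [← Finset.mul_prod_erase Finset.univ _ (Finset.mem_univ k0)]
    have hc0 : |c k0| = |Real.sin (θ (i : ℕ))| := by
      simp only [hcdef, hk0def, if_pos rfl, abs_neg, hμi]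
    have hrest : (∏ k ∈ Finset.univ.erase k0, |c k|) ≤ 1 := by
      apply Finset.prod_le_one (fun k _ => abs_nonneg _)
      intro k hk
      have hkne : (k : ℕ) ≠ 0 := by
        intro hc
        exact (Finset.mem_erase.mp hk).1 (Fin.ext hc)
      simp only [hcdef, if_neg hkne]
      exact Real.abs_cos_le_one _
    calc |c k0| * (∏ k ∈ Finset.univ.erase k0, |c k|)
        ≤ |c k0| * 1 := by
          exact mul_le_mul_of_nonneg_left hrest (abs_nonneg _)
      _ = |Real.sin (θ (i : ℕ))| := by rw [mul_one, hc0]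
      _ ≤ 𝔰 := hbound i
  · -- two rows coincide, so the determinant vanishes
    set k0 : Fin n := ⟨0, i.pos⟩ with hk0def
    have hk1lt : (if (μ : ℕ) < (i : ℕ) then (μ : ℕ) + 1 else (μ : ℕ)) < n := by
      have hi := i.2; split_ifs <;> omega
    set k1 : Fin n := ⟨if (μ : ℕ) < (i : ℕ) then (μ : ℕ) + 1 else (μ : ℕ), hk1lt⟩ with hk1def
    have hk1ne : (k1 : ℕ) ≠ 0 := by
      simp only [hk1def]
      split_ifs with h <;> omega
    have hne : k0 ≠ k1 := by
      intro h
      exact hk1ne (by rw [← h])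
    have hσ0 : σ' k0 = (μ : ℕ) := by simp [hσ'def, hk0def]
    have hσ1 : σ' k1 = (μ : ℕ) := by
      simp only [hσ'def, if_neg hk1ne, hk1def]
      split_ifs <;> omega
    have hrows : (A.submatrix σ id) k0 = (A.submatrix σ id) k1 := by
      funext l
      simp only [Matrix.submatrix_apply, id_eq, hσdef]
      congr 1
      exact Fin.ext (hσ0.trans hσ1.symm)
    rw [Matrix.det_zero_of_row_eq hne hrows, mul_zero, abs_zero]
    exact h𝔰0
end
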